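/- arXiv:math/0309436 — 2 statements merged into one kernel-verified Lean document; each statement's English description precedes it below -/
import Mathlib

section
/- Fix integers 1 ≤ k ≤ n, set m = n − k, and let λ, μ be partitions in the k×m box. Let F be the standard flag and F̃ the opposite flag of ℂ^n. Then the intersection Ω_λ(F) ∩ Ω_μ(F̃) is nonempty if and only if λ_i + μ_{k+1−i} ≤ m for all 1 ≤ i ≤ k (equivalently, if and only if the Young diagram of λ is contained in that of μ^∨). -/
/-- The coordinate subspace of `ℂ^n` spanned by the standard basis vectors `e_j`, `j ∈ s`. -/
noncomputable def coordSub (n : ℕ) (s : Set (Fin n)) : Submodule ℂ (Fin n → ℂ) :=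
  Submodule.span ℂ ((fun j => Pi.single j (1 : ℂ)) '' s)

/-- The standard flag of `ℂ^n`: `stdFlag n i = span(e_1, …, e_{i+1})` (0-indexed `i`,
so `stdFlag n i` has dimension `i + 1`). -/
noncomputable def stdFlag (n : ℕ) (i : Fin n) : Submodule ℂ (Fin n → ℂ) :=
  coordSub n {j | j ≤ i}

/-- The opposite flag of `ℂ^n`: `oppFlag n i` is the span of the last `i + 1` standard
basis vectors (0-indexed `i`, so `oppFlag n i` has dimension `i + 1`). -/
noncomputable def oppFlag (n : ℕ) (i : Fin n) : Submodule ℂ (Fin n → ℂ) :=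
  coordSub n {j | n ≤ j.val + i.val + 1}

/-- The jump positions of a sequence `lam` in the `k × (n-k)` box, as indices into a
complete flag of `ℂ^n`: `posIdx n k hk lam j` is the 0-indexed position whose
1-indexed value is `p_j(lam) = (n-k) + (j+1) - lam j`. -/
def posIdx (n k : ℕ) (hk : k ≤ n) (lam : Fin k → ℕ) (j : Fin k) : Fin n :=
  ⟨(n - k) + j.val - lam j, by have := j.isLt; omega⟩

/-- Membership of a subspace `L` in the Schubert variety `Ω_lam(G)` for a complete flag
`G` of `ℂ^n` (where `G i` has dimension `i + 1`): `dim (L ⊓ G (p_j lam)) ≥ j` for all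
`j = 1, …, k` (1-indexed). -/
def inSchubert (n k : ℕ) (hk : k ≤ n) (G : Fin n → Submodule ℂ (Fin n → ℂ))
    (lam : Fin k → ℕ) (L : Submodule ℂ (Fin n → ℂ)) : Prop :=
  ∀ j : Fin k, j.val + 1 ≤ Module.finrank ℂ ↥(L ⊓ G (posIdx n k hk lam j))

/-- The coordinate subspace `E_lam = span(e_{p_1(lam)}, …, e_{p_k(lam)})` of `ℂ^n`. -/
noncomputable def coordE (n k : ℕ) (hk : k ≤ n) (lam : Fin k → ℕ) :
    Submodule ℂ (Fin n → ℂ) :=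
  coordSub n (Set.range (posIdx n k hk lam))

/-- The dual of a sequence `lam` in the `k × m` box. -/
def boxDual (k m : ℕ) (lam : Fin k → ℕ) : Fin k → ℕ :=
  fun i => m - lam i.rev

lemma single_li (n : ℕ) : LinearIndependent ℂ (fun j : Fin n => Pi.single j (1 : ℂ)) := by
  have h := (Pi.basisFun ℂ (Fin n)).linearIndependent
  have e : ⇑(Pi.basisFun ℂ (Fin n)) = fun j : Fin n => Pi.single j (1 : ℂ) := by
    funext j; exact Pi.basisFun_apply ℂ (Fin n) j
  rwa [e] at h

lemma finrank_coordSub_range {α : Type} [Fintype α] (n : ℕ) (f : α → Fin n)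
    (hf : Function.Injective f) :
    Module.finrank ℂ (coordSub n (Set.range f)) = Fintype.card α := by
  rw [coordSub, ← Set.range_comp, finrank_span_eq_card]
  exact (single_li n).comp f hf

lemma coordSub_mono (n : ℕ) {s t : Set (Fin n)} (h : s ⊆ t) : coordSub n s ≤ coordSub n t :=
  Submodule.span_mono (Set.image_mono h)

lemma card_le_finrank {α : Type} [Fintype α] (n : ℕ) (f : α → Fin n)
    (hf : Function.Injective f) (M : Submodule ℂ (Fin n → ℂ))
    (h : coordSub n (Set.range f) ≤ M) : Fintype.card α ≤ Module.finrank ℂ M := by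
  rw [← finrank_coordSub_range n f hf]
  exact Submodule.finrank_mono h

lemma coordSub_apply_eq_zero {n : ℕ} {s : Set (Fin n)} {f : Fin n → ℂ}
    (hf : f ∈ coordSub n s) {j : Fin n} (hj : j ∉ s) : f j = 0 := by
  induction hf using Submodule.span_induction with
  | mem x hx =>
    obtain ⟨j', hj', rfl⟩ := hx
    have hne : j ≠ j' := fun h => hj (h ▸ hj')
    exact Pi.single_eq_of_ne hne 1
  | zero => rfl
  | add x y _ _ hx hy => simp [hx, hy]
  | smul a x _ hx => simp [hx]

/-- For partitions `lam`, `mu` in the `k × (n-k)` box, the intersection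
`Ω_lam(F) ∩ Ω_mu(F̃)` of the Schubert varieties for the standard flag `F` and the
opposite flag `F̃` is nonempty iff `lam i + mu (k+1-i) ≤ n - k` for all `i`
(equivalently, iff the Young diagram of `lam` is contained in that of `mu^∨`). -/
theorem schubert_inter_opposite_nonempty_iff (n k : ℕ) (hk1 : 1 ≤ k) (hkn : k ≤ n)
    (lam mu : Fin k → ℕ)
    (hlam_anti : ∀ i j : Fin k, i ≤ j → lam j ≤ lam i)
    (hlam_bd : ∀ i, lam i ≤ n - k)
    (hmu_anti : ∀ i j : Fin k, i ≤ j → mu j ≤ mu i)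
    (hmu_bd : ∀ i, mu i ≤ n - k) :
    (∃ L : Submodule ℂ (Fin n → ℂ),
        Module.finrank ℂ ↥L = k ∧
        inSchubert n k hkn (stdFlag n) lam L ∧
        inSchubert n k hkn (oppFlag n) mu L) ↔
      ∀ i : Fin k, lam i + mu i.rev ≤ n - k := by
  constructor
  · rintro ⟨L, hLr, hstd, hopp⟩ i
    by_contra hcon
    push_neg at hcon
    set p := posIdx n k hkn lam i with hp
    set q := posIdx n k hkn mu i.rev with hq
    have h1 := hstd i
    have h2 := hopp i.rev
    rw [← hp] at h1
    rw [← hq] at h2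
    have hrev : (i.rev : ℕ) = k - (i.val + 1) := Fin.val_rev i
    have hpv : (p : ℕ) = (n - k) + i.val - lam i := rfl
    have hqv : (q : ℕ) = (n - k) + i.rev.val - mu i.rev := rfl
    have hbot : (L ⊓ stdFlag n p) ⊓ (L ⊓ oppFlag n q) = ⊥ := by
      rw [eq_bot_iff]
      rintro f ⟨⟨-, hf1⟩, -, hf2⟩
      simp only [Submodule.mem_bot]
      funext j
      show f j = 0
      by_cases hj : j ≤ p
      · refine coordSub_apply_eq_zero hf2 ?_
        have hjv : (j : ℕ) ≤ (p : ℕ) := hj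
        have hlb := hlam_bd i; have hmb := hmu_bd i.rev
        have hik := i.isLt
        simp only [Set.mem_setOf_eq]
        omega
      · refine coordSub_apply_eq_zero hf1 ?_
        simpa [Set.mem_setOf_eq] using hj
    have hsum := Submodule.finrank_sup_add_finrank_inf_eq (L ⊓ stdFlag n p) (L ⊓ oppFlag n q)
    rw [hbot, finrank_bot] at hsum
    have hle : Module.finrank ℂ ↥((L ⊓ stdFlag n p) ⊔ (L ⊓ oppFlag n q)) ≤
        Module.finrank ℂ ↥L :=
      Submodule.finrank_mono (sup_le inf_le_left inf_le_left)
    have hik := i.isLt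
    omega
  · intro hcond
    have hsm : ∀ a b : Fin k, a < b →
        (posIdx n k hkn lam a : ℕ) < (posIdx n k hkn lam b : ℕ) := by
      intro a b hab
      have h1 := hlam_anti a b (le_of_lt hab)
      have h2 := hlam_bd a
      have h3 : (a : ℕ) < (b : ℕ) := hab
      show (n - k) + a.val - lam a < (n - k) + b.val - lam b
      omega
    have hinj : Function.Injective (posIdx n k hkn lam) := by
      intro a b hab
      by_contra hne
      rcases lt_or_gt_of_ne hne with h | h
      · exact absurd (congrArg Fin.val hab) (Nat.ne_of_lt (hsm a b h))
      · exact absurd (congrArg Fin.val hab).symm (Nat.ne_of_lt (hsm b a h))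
    refine ⟨coordE n k hkn lam, ?_, ?_, ?_⟩
    · rw [coordE, finrank_coordSub_range n _ hinj, Fintype.card_fin]
    · intro j
      set f : Fin (j.val + 1) → Fin n :=
        fun i => posIdx n k hkn lam ⟨i.val, by have := j.isLt; omega⟩ with hf
      have hfi : Function.Injective f := by
        intro a b hab
        have h := congrArg Fin.val (hinj hab)
        simp only at h
        exact Fin.ext h
      have hle : coordSub n (Set.range f) ≤
          coordE n k hkn lam ⊓ stdFlag n (posIdx n k hkn lam j) := by
        refine le_inf (coordSub_mono n ?_) (coordSub_mono n ?_)
        · rintro x ⟨a, rfl⟩; exact ⟨_, rfl⟩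
        · rintro x ⟨a, rfl⟩
          simp only [Set.mem_setOf_eq]
          have hidx : (⟨a.val, by have := j.isLt; omega⟩ : Fin k) ≤ j := by
            rw [Fin.le_def]
            show a.val ≤ j.val
            have := a.isLt; omega
          rw [Fin.le_def]
          show (posIdx n k hkn lam ⟨a.val, by have := j.isLt; omega⟩ : ℕ) ≤
            (posIdx n k hkn lam j : ℕ)
          rcases eq_or_lt_of_le hidx with h | h
          · rw [h]
          · exact le_of_lt (hsm _ j h)
      have := card_le_finrank n f hfi _ hle
      simpa using this
    · intro j
      set f : Fin (j.val + 1) → Fin n :=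
        fun i => posIdx n k hkn lam ⟨k - 1 - j.val + i.val, by have := j.isLt; omega⟩ with hf
      have hfi : Function.Injective f := by
        intro a b hab
        have h := congrArg Fin.val (hinj hab)
        simp only at h
        have : a.val = b.val := by omega
        exact Fin.ext this
      have hle : coordSub n (Set.range f) ≤
          coordE n k hkn lam ⊓ oppFlag n (posIdx n k hkn mu j) := by
        refine le_inf (coordSub_mono n ?_) (coordSub_mono n ?_)
        · rintro x ⟨a, rfl⟩; exact ⟨_, rfl⟩
        · rintro x ⟨a, rfl⟩
          simp only [Set.mem_setOf_eq]
          show n ≤ (f a : ℕ) + (posIdx n k hkn mu j : ℕ) + 1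
          have hjk := j.isLt
          have hak := a.isLt
          set b : Fin k := ⟨k - 1 - j.val + a.val, by omega⟩ with hb
          set c : Fin k := ⟨k - 1 - j.val, by omega⟩ with hc
          have h1 : lam b ≤ lam c := hlam_anti c b (by show c.val ≤ b.val; simp [hb, hc])
          have h2 := hcond c
          have hcrev : (c.rev : ℕ) = j.val := by
            rw [Fin.val_rev]; simp [hc]; omega
          have hcj : c.rev = j := Fin.ext hcrev
          rw [hcj] at h2
          have h3 := hlam_bd b
          have h4 := hmu_bd j
          show n ≤ ((n - k) + b.val - lam b) + ((n - k) + j.val - mu j) + 1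
          have hbv : b.val = k - 1 - j.val + a.val := rfl
          omega
      have := card_le_finrank n f hfi _ hle
      simpa using this
end

section
/- (Buch's kernel bound.) Fix integers 1 ≤ k ≤ n and d ≥ 0. Let M be an n×k matrix with entries in the polynomial ring ℂ[t] such that for every t ∈ ℂ the evaluated matrix M(t) has rank k, and such that every k×k minor of M (a polynomial in t) has degree at most d. For t ∈ ℂ let L(t) ⊆ ℂ^n be the column span of M(t), a k-dimensional subspace. Then the intersection K = ⋂_{t ∈ ℂ} L(t) satisfies dim K + d ≥ k, i.e. dim K ≥ k − d. -/
open Polynomial Matrix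

namespace Buch

variable {n k : ℕ}

/-- column degree -/
noncomputable def colDeg (M : Matrix (Fin n) (Fin k) ℂ[X]) (j : Fin k) : ℕ :=
  Finset.univ.sup fun i => (M i j).natDegree

lemma natDegree_le_colDeg (M : Matrix (Fin n) (Fin k) ℂ[X]) (i : Fin n) (j : Fin k) :
    (M i j).natDegree ≤ colDeg M j :=
  Finset.le_sup (f := fun i => (M i j).natDegree) (Finset.mem_univ i)

/-- leading-coefficient matrix -/
noncomputable def lead (M : Matrix (Fin n) (Fin k) ℂ[X]) : Matrix (Fin n) (Fin k) ℂ :=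
  fun i j => (M i j).coeff (colDeg M j)

lemma coeff_prod_sum {ι : Type*} (s : Finset ι) (f : ι → ℂ[X]) (d : ι → ℕ)
    (h : ∀ i ∈ s, (f i).natDegree ≤ d i) :
    (∏ i ∈ s, f i).coeff (∑ i ∈ s, d i) = ∏ i ∈ s, (f i).coeff (d i) := by
  induction s using Finset.cons_induction with
  | empty => simp
  | cons a s ha ih =>
    rw [Finset.prod_cons, Finset.sum_cons, Finset.prod_cons,
      Polynomial.coeff_mul_add_eq_of_natDegree_le (h a (Finset.mem_cons_self a s))
        ((Polynomial.natDegree_prod_le s f).trans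
          (Finset.sum_le_sum fun i hi => h i (Finset.mem_cons_of_mem hi))),
      ih fun i hi => h i (Finset.mem_cons_of_mem hi)]

lemma coeff_det (A : Matrix (Fin k) (Fin k) ℂ[X]) (d : Fin k → ℕ)
    (h : ∀ i j, (A i j).natDegree ≤ d j) :
    (A.det).coeff (∑ j, d j) = (Matrix.of fun i j => (A i j).coeff (d j)).det := by
  rw [Matrix.det_apply', Matrix.det_apply', Polynomial.finset_sum_coeff]
  refine Finset.sum_congr rfl fun σ _ => ?_
  have : ((Equiv.Perm.sign σ : ℤ) : ℂ[X]) = Polynomial.C ((Equiv.Perm.sign σ : ℤ) : ℂ) := by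
    simp [Polynomial.C_eq_intCast]
  rw [this, Polynomial.coeff_C_mul,
    coeff_prod_sum Finset.univ _ d (fun i _ => h (σ i) i)]
  rfl

lemma cols_li_iff (A : Matrix (Fin n) (Fin k) ℂ) :
    LinearIndependent ℂ (fun j => Aᵀ j) ↔ A.rank = k := by
  rw [linearIndependent_iff_card_eq_finrank_span, A.rank_eq_finrank_span_cols]
  simp [Set.finrank, eq_comm]
  rfl

lemma exists_submatrix (A : Matrix (Fin n) (Fin k) ℂ) (h : A.rank = k) :
    ∃ g : Fin k → Fin n, Function.Injective g ∧ (A.submatrix g id).det ≠ 0 := by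
  classical
  have hspan : Submodule.span ℂ (Set.range fun i => A i) = ⊤ := by
    apply Submodule.eq_top_of_finrank_eq
    have h2 := A.rank_eq_finrank_span_row
    rw [h] at h2
    rw [Module.finrank_fin_fun]
    exact h2.symm
  obtain ⟨b, hbsub, hbspan, hbli⟩ := exists_linearIndependent ℂ (Set.range fun i => A i)
  rw [hspan] at hbspan
  have hbfin : b.Finite := hbli.setFinite
  haveI : Fintype b := hbfin.fintype
  have hcard' : Fintype.card b = k := by
    have h1 := finrank_span_set_eq_card hbli
    rw [hbspan] at h1
    rw [finrank_top, Module.finrank_pi, Fintype.card_fin] at h1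
    rw [Set.toFinset_card] at h1
    omega
  let e : Fin k ≃ b := (Fintype.equivFinOfCardEq hcard').symm
  have hchoice : ∀ x : b, ∃ i : Fin n, A i = (x : Fin k → ℂ) := fun x => hbsub x.2
  choose pick hpick using hchoice
  refine ⟨fun j => pick (e j), ?_, ?_⟩
  · intro j j' hjj'
    simp only at hjj'
    have : (e j : Fin k → ℂ) = (e j' : Fin k → ℂ) := by
      rw [← hpick (e j), ← hpick (e j'), hjj']
    exact e.injective (Subtype.ext this)
  · have hli : LinearIndependent ℂ (fun j : Fin k => (A.submatrix (fun j => pick (e j)) id) j) := by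
      have : (fun j : Fin k => (A.submatrix (fun j => pick (e j)) id) j)
          = fun j => ((e j : Fin k → ℂ)) := by
        funext j; exact hpick (e j)
      rw [this]
      exact hbli.comp e e.injective
    have := Matrix.linearIndependent_rows_iff_isUnit.mp hli
    exact (Matrix.isUnit_iff_isUnit_det _ |>.mp this).ne_zero

lemma natDegree_le_pred {p : ℂ[X]} {m : ℕ} (h1 : p.natDegree ≤ m) (h2 : p.coeff m = 0)
    (h3 : 1 ≤ m) : p.natDegree ≤ m - 1 := by
  rcases lt_or_eq_of_le h1 with h | h
  · omega
  · exfalso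
    rcases eq_or_ne p 0 with rfl | hp
    · simp at h; omega
    · rw [← h] at h2
      exact hp (Polynomial.leadingCoeff_eq_zero.mp h2)

lemma span_cols_mul (A : Matrix (Fin n) (Fin k) ℂ) (B : Matrix (Fin k) (Fin k) ℂ)
    (hB : IsUnit B.det) :
    Submodule.span ℂ (Set.range fun j => fun i => (A * B) i j)
      = Submodule.span ℂ (Set.range fun j => fun i => A i j) := by
  classical
  have h1 : ∀ (C : Matrix (Fin n) (Fin k) ℂ),
      Submodule.span ℂ (Set.range fun j => fun i => C i j) = LinearMap.range C.mulVecLin := by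
    intro C
    rw [Matrix.range_mulVecLin]
    rfl
  rw [h1, h1, Matrix.mulVecLin_mul]
  apply LinearMap.range_comp_of_range_eq_top
  rw [LinearMap.range_eq_top]
  intro v
  exact ⟨(B⁻¹).mulVecLin v, by simp [Matrix.mul_nonsing_inv _ hB]⟩

lemma exists_reduction (M : Matrix (Fin n) (Fin k) ℂ[X])
    (hrank0 : (M.map (Polynomial.eval 0)).rank = k)
    (hL : (lead M).rank ≠ k) :
    ∃ M' : Matrix (Fin n) (Fin k) ℂ[X],
      (∑ j, colDeg M' j) < (∑ j, colDeg M j) ∧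
      (∀ t : ℂ, (M'.map (Polynomial.eval t)).rank = (M.map (Polynomial.eval t)).rank) ∧
      (∀ g : Fin k → Fin n,
        ((M'.submatrix g id).det).natDegree ≤ ((M.submatrix g id).det).natDegree) ∧
      (∀ t : ℂ, Submodule.span ℂ
          (Set.range fun j : Fin k => fun i : Fin n => (M' i j).eval t)
        = Submodule.span ℂ
          (Set.range fun j : Fin k => fun i : Fin n => (M i j).eval t)) := by
  classical
  have hnotli : ¬ LinearIndependent ℂ (fun j => (lead M)ᵀ j) := fun h => hL ((cols_li_iff _).mp h)
  obtain ⟨w, hw0, j1, hj1⟩ := Fintype.not_linearIndependent_iff.mp hnotli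
  have hw : ∀ i : Fin n, ∑ j, w j * lead M i j = 0 := by
    intro i
    have := congr_fun hw0 i
    simpa using this
  have hsupp : (Finset.univ.filter (fun j : Fin k => w j ≠ 0)).Nonempty :=
    ⟨j1, by simp [hj1]⟩
  obtain ⟨j0, hj0mem, hj0max⟩ :=
    Finset.exists_max_image (Finset.univ.filter (fun j : Fin k => w j ≠ 0)) (colDeg M) hsupp
  have hwj0 : w j0 ≠ 0 := by simpa using hj0mem
  have hmax : ∀ j : Fin k, w j ≠ 0 → colDeg M j ≤ colDeg M j0 := by
    intro j hj; exact hj0max j (by simp [hj])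
  set m0 := colDeg M j0 with hm0
  -- m0 ≥ 1
  have c1 : 1 ≤ m0 := by
    by_contra hc
    have hm00 : m0 = 0 := by omega
    have hli0 : LinearIndependent ℂ (fun j : Fin k => fun i : Fin n => (M i j).eval 0) :=
      (cols_li_iff (M.map (Polynomial.eval 0))).mpr hrank0
    have := Fintype.linearIndependent_iff.mp hli0 w ?_ j1
    · exact hj1 this
    · funext i
      simp only [Finset.sum_apply, Pi.smul_apply, smul_eq_mul, Pi.zero_apply]
      have heq : ∑ j, w j * Polynomial.eval 0 (M i j) = ∑ j, w j * lead M i j := by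
        apply Finset.sum_congr rfl
        intro j _
        rcases eq_or_ne (w j) 0 with h | h
        · simp [h]
        · have h0 : colDeg M j = 0 := by have := hmax j h; omega
          rw [lead]
          rw [h0, Polynomial.coeff_zero_eq_eval_zero]
      rw [heq, hw i]
  -- elementary matrix
  set E : Matrix (Fin k) (Fin k) ℂ[X] :=
    (1 : Matrix (Fin k) (Fin k) ℂ[X]).updateCol j0
      (fun j => Polynomial.C (w j) * X ^ (m0 - colDeg M j)) with hE
  have hdetE : E.det = Polynomial.C (w j0) := by
    rw [hE, ← Matrix.cramer_apply, Matrix.cramer_one]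
    simp [hm0]
  set M' := M * E with hM'
  have hM'col : ∀ (i : Fin n) (j : Fin k), j ≠ j0 → M' i j = M i j := by
    intro i j hj
    rw [hM', Matrix.mul_apply]
    have hEcol : ∀ j' : Fin k, E j' j = if j' = j then 1 else 0 := by
      intro j'
      rw [hE, Matrix.updateCol_ne hj]
      exact Matrix.one_apply
    simp only [hEcol, mul_ite, mul_one, mul_zero]
    rw [Finset.sum_ite_eq' Finset.univ j (fun j' => M i j')]
    simp
  have hM'j0 : ∀ i : Fin n, M' i j0
      = ∑ j', M i j' * (Polynomial.C (w j') * X ^ (m0 - colDeg M j')) := by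
    intro i
    rw [hM', Matrix.mul_apply]
    apply Finset.sum_congr rfl
    intro j' _
    rw [hE, Matrix.updateCol_self]
  -- degree bound on new column j0
  have hdegj0 : ∀ i : Fin n, (M' i j0).natDegree ≤ m0 - 1 := by
    intro i
    apply natDegree_le_pred _ _ c1
    · rw [hM'j0 i]
      apply Polynomial.natDegree_sum_le_of_forall_le
      intro j' _
      rcases eq_or_ne (w j') 0 with h | h
      · simp [h]
      · have hle : colDeg M j' ≤ m0 := hmax j' h
        calc (M i j' * (Polynomial.C (w j') * X ^ (m0 - colDeg M j'))).natDegree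
            ≤ (M i j').natDegree
              + (Polynomial.C (w j') * X ^ (m0 - colDeg M j')).natDegree :=
              Polynomial.natDegree_mul_le
          _ ≤ (M i j').natDegree
              + ((Polynomial.C (w j')).natDegree + (X ^ (m0 - colDeg M j') : ℂ[X]).natDegree) :=
              by gcongr; exact Polynomial.natDegree_mul_le
          _ ≤ colDeg M j' + (0 + (m0 - colDeg M j')) := by
              gcongr
              · exact natDegree_le_colDeg M i j'
              · exact le_of_eq (Polynomial.natDegree_C _)
              · exact le_of_eq (Polynomial.natDegree_X_pow _)
          _ ≤ m0 := by omega
    · rw [hM'j0 i, Polynomial.finset_sum_coeff]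
      have hterm : ∀ j' : Fin k,
          (M i j' * (Polynomial.C (w j') * X ^ (m0 - colDeg M j'))).coeff m0
          = w j' * lead M i j' := by
        intro j'
        rcases eq_or_ne (w j') 0 with h | h
        · simp [h]
        · have hle : colDeg M j' ≤ m0 := hmax j' h
          rw [show M i j' * (Polynomial.C (w j') * X ^ (m0 - colDeg M j'))
              = Polynomial.C (w j') * (M i j' * X ^ (m0 - colDeg M j')) by ring,
            Polynomial.coeff_C_mul, Polynomial.coeff_mul_X_pow']
          rw [if_pos (by omega)]
          congr 1
          · rw [lead]
            congr 1
            omega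
      rw [Finset.sum_congr rfl fun j' _ => hterm j']
      exact hw i
  have hdegcol : colDeg M' j0 ≤ m0 - 1 := Finset.sup_le fun i _ => hdegj0 i
  have hcolne : ∀ j : Fin k, j ≠ j0 → colDeg M' j = colDeg M j := by
    intro j hj
    apply Finset.sup_congr rfl
    intro i _
    rw [hM'col i j hj]
  -- invertibility of E after evaluation
  have hEdet : ∀ t : ℂ, IsUnit ((E.map (Polynomial.eval t)).det) := by
    intro t
    have := (RingHom.map_det (Polynomial.evalRingHom t) E).symm
    rw [RingHom.mapMatrix_apply] at this
    have h2 : (E.map (Polynomial.eval t)).det = Polynomial.eval t E.det := this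
    rw [h2, hdetE]
    simp [isUnit_iff_ne_zero, hwj0]
  have hmapmul : ∀ t : ℂ, (M'.map (Polynomial.eval t))
      = (M.map (Polynomial.eval t)) * (E.map (Polynomial.eval t)) := by
    intro t
    rw [hM']
    exact Matrix.map_mul (f := Polynomial.evalRingHom t)
  refine ⟨M', ?_, ?_, ?_, ?_⟩
  · apply Finset.sum_lt_sum
    · intro j _
      rcases eq_or_ne j j0 with rfl | hj
      · exact hdegcol.trans (by omega)
      · exact le_of_eq (hcolne j hj)
    · exact ⟨j0, Finset.mem_univ j0, by have := hdegcol; omega⟩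
  · intro t
    rw [hmapmul t, Matrix.rank_mul_eq_left_of_isUnit_det _ _ (hEdet t)]
  · intro g
    have hsub : (M'.submatrix g id) = (M.submatrix g id) * E := by
      rw [hM', Matrix.submatrix_mul M E g id id Function.bijective_id, Matrix.submatrix_id_id]
    rw [hsub, Matrix.det_mul, hdetE]
    calc ((M.submatrix g id).det * Polynomial.C (w j0)).natDegree
        ≤ ((M.submatrix g id).det).natDegree + (Polynomial.C (w j0)).natDegree :=
          Polynomial.natDegree_mul_le
      _ = ((M.submatrix g id).det).natDegree := by rw [Polynomial.natDegree_C, add_zero]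
  · intro t
    have e1 : (fun j : Fin k => fun i : Fin n => (M' i j).eval t)
        = fun j => fun i => ((M.map (Polynomial.eval t)) * (E.map (Polynomial.eval t))) i j := by
      rw [← hmapmul t]; rfl
    have e2 : (fun j : Fin k => fun i : Fin n => (M i j).eval t)
        = fun j => fun i => (M.map (Polynomial.eval t)) i j := rfl
    rw [e1, e2]
    exact span_cols_mul _ _ (hEdet t)

lemma case_full (d : ℕ) (M : Matrix (Fin n) (Fin k) ℂ[X])
    (hrank : ∀ t : ℂ, (M.map (Polynomial.eval t)).rank = k)
    (hsum : (∑ j, colDeg M j) ≤ d) :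
    k ≤ Module.finrank ℂ
        ↥(⨅ t : ℂ, Submodule.span ℂ
            (Set.range fun j : Fin k => fun i : Fin n => (M i j).eval t)) + d := by
  classical
  set S := Finset.univ.filter (fun j : Fin k => colDeg M j = 0) with hS
  have hcard : k ≤ S.card + d := by
    have h1 : S.card + (Finset.univ.filter (fun j : Fin k => ¬ colDeg M j = 0)).card = k := by
      rw [Finset.card_filter_add_card_filter_not]; simp
    have h2 : (Finset.univ.filter (fun j : Fin k => ¬ colDeg M j = 0)).card
        ≤ ∑ j ∈ Finset.univ.filter (fun j : Fin k => ¬ colDeg M j = 0), colDeg M j := by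
      rw [Finset.card_eq_sum_ones]
      apply Finset.sum_le_sum
      intro j hj
      simp only [Finset.mem_filter] at hj
      omega
    have h3 : ∑ j ∈ Finset.univ.filter (fun j : Fin k => ¬ colDeg M j = 0), colDeg M j
        ≤ ∑ j, colDeg M j :=
      Finset.sum_le_sum_of_subset (Finset.filter_subset _ _)
    omega
  have hC : ∀ j : Fin k, colDeg M j = 0 → ∀ (t : ℂ) (i : Fin n),
      (M i j).eval t = (M i j).coeff 0 := by
    intro j hj t i
    have h0 : (M i j).natDegree ≤ 0 := hj ▸ natDegree_le_colDeg M i j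
    have heq := Polynomial.eq_C_of_natDegree_le_zero h0
    rw [heq]
    simp
  have hli0 : LinearIndependent ℂ (fun j : Fin k => fun i : Fin n => (M i j).eval 0) :=
    (cols_li_iff (M.map (Polynomial.eval 0))).mpr (hrank 0)
  let v : {j : Fin k // colDeg M j = 0} → (Fin n → ℂ) := fun j => fun i => (M i j.1).coeff 0
  have hv_li : LinearIndependent ℂ v := by
    have h2 := hli0.comp (Subtype.val : {j : Fin k // colDeg M j = 0} → Fin k)
      Subtype.val_injective
    have : v = fun j : {j : Fin k // colDeg M j = 0} =>
        (fun i : Fin n => (M i j.1).eval 0) := by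
      funext j; funext i; exact (hC j.1 j.2 0 i).symm
    rw [this]
    exact h2
  have hle : Submodule.span ℂ (Set.range v)
      ≤ ⨅ t : ℂ, Submodule.span ℂ
          (Set.range fun j : Fin k => fun i : Fin n => (M i j).eval t) := by
    rw [Submodule.span_le]
    rintro x ⟨j, rfl⟩
    rw [SetLike.mem_coe, Submodule.mem_iInf]
    intro t
    apply Submodule.subset_span
    exact ⟨j.1, by funext i; exact hC j.1 j.2 t i⟩
  have hfr : Module.finrank ℂ ↥(Submodule.span ℂ (Set.range v)) = S.card := by
    rw [finrank_span_eq_card hv_li, Fintype.card_subtype]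
  have hmono := Submodule.finrank_mono hle
  omega

lemma sum_le_of_lead_full (d : ℕ) (M : Matrix (Fin n) (Fin k) ℂ[X])
    (hdeg : ∀ g : Fin k → Fin n, Function.Injective g →
      ((M.submatrix g id).det).natDegree ≤ d)
    (hL : (lead M).rank = k) : (∑ j, colDeg M j) ≤ d := by
  obtain ⟨g, hginj, hgdet⟩ := exists_submatrix (lead M) hL
  have hco : ((M.submatrix g id).det).coeff (∑ j, colDeg M j)
      = ((lead M).submatrix g id).det := by
    rw [coeff_det (M.submatrix g id) (colDeg M) (fun i j => natDegree_le_colDeg M (g i) j)]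
    rfl
  have hne : ((M.submatrix g id).det).coeff (∑ j, colDeg M j) ≠ 0 := by
    rw [hco]; exact hgdet
  exact (Polynomial.le_natDegree_of_ne_zero hne).trans (hdeg g hginj)

lemma key (d : ℕ) (N : ℕ) :
    ∀ M : Matrix (Fin n) (Fin k) ℂ[X],
      (∑ j, colDeg M j) ≤ N →
      (∀ t : ℂ, (M.map (Polynomial.eval t)).rank = k) →
      (∀ g : Fin k → Fin n, Function.Injective g →
        ((M.submatrix g id).det).natDegree ≤ d) →
      k ≤ Module.finrank ℂ
          ↥(⨅ t : ℂ, Submodule.span ℂ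
              (Set.range fun j : Fin k => fun i : Fin n => (M i j).eval t)) + d := by
  induction N with
  | zero =>
    intro M hN hrank hdeg
    by_cases hL : (lead M).rank = k
    · exact case_full d M hrank (sum_le_of_lead_full d M hdeg hL)
    · obtain ⟨M', hlt, _, _, _⟩ := exists_reduction M (hrank 0) hL
      omega
  | succ N ih =>
    intro M hN hrank hdeg
    by_cases hL : (lead M).rank = k
    · exact case_full d M hrank (sum_le_of_lead_full d M hdeg hL)
    · obtain ⟨M', hlt, hrk, hdg, hspan⟩ := exists_reduction M (hrank 0) hL
      have hK : (⨅ t : ℂ, Submodule.span ℂ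
            (Set.range fun j : Fin k => fun i : Fin n => (M' i j).eval t))
          = ⨅ t : ℂ, Submodule.span ℂ
            (Set.range fun j : Fin k => fun i : Fin n => (M i j).eval t) :=
        iInf_congr hspan
      rw [← hK]
      exact ih M' (by omega) (fun t => (hrk t).trans (hrank t))
        (fun g hg => (hdg g).trans (hdeg g hg))

end Buch

open Polynomial in
/-- **Buch's kernel bound.** Let `M` be an `n × k` matrix over `ℂ[t]` such that `M(t)`
has rank `k` for every `t ∈ ℂ` and every `k × k` minor of `M` has degree at most `d`
(so `M` encodes a morphism `f : ℙ¹ → Gr(k,n)` of degree at most `d`, with `f(t)` the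
column span `L(t)` of `M(t)`). Then the intersection `K = ⋂_t L(t)` of all these
`k`-dimensional subspaces satisfies `dim K ≥ k - d`, i.e. `dim K + d ≥ k`. -/
theorem buch_kernel_bound (n k : ℕ) (hk1 : 1 ≤ k) (hkn : k ≤ n) (d : ℕ)
    (M : Matrix (Fin n) (Fin k) ℂ[X])
    (hrank : ∀ t : ℂ, (M.map (Polynomial.eval t)).rank = k)
    (hdeg : ∀ g : Fin k → Fin n, Function.Injective g →
      ((M.submatrix g id).det).natDegree ≤ d) :
    k ≤ Module.finrank ℂ
        ↥(⨅ t : ℂ, Submodule.span ℂ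
            (Set.range fun j : Fin k => fun i : Fin n => (M i j).eval t)) + d :=
  Buch.key d (∑ j, Buch.colDeg M j) M le_rfl hrank hdeg
end
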